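/- Let n ≥ 2 and let P(z) = ∏_{k=1}^{n}(z - z_k) be a monic polynomial whose zeros all lie in the closed unit disk |z| ≤ 1. If a zero z_j satisfies |z_j| ≤ n^{1/(n-1)} - 1, then there exists w ∈ ℂ with P'(w) = 0 and |w - z_j| ≤ 1. -/

import Mathlib

open Polynomial

private lemma one_le_multiset_prod (s : Multiset ℝ) (h : ∀ x ∈ s, 1 ≤ x) :
    1 ≤ s.prod := by
  induction s using Multiset.induction_on with
  | empty => simp
  | cons a t ih =>
    rw [Multiset.prod_cons]
    have ha : 1 ≤ a := h a (Multiset.mem_cons_self a t)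
    have ht : 1 ≤ t.prod := ih fun x hx => h x (Multiset.mem_cons_of_mem hx)
    nlinarith

private lemma multiset_prod_le_pow (s : Multiset ℝ) (t : ℝ)
    (h0 : ∀ x ∈ s, 0 ≤ x) (h : ∀ x ∈ s, x ≤ t) :
    s.prod ≤ t ^ (Multiset.card s) := by
  induction s using Multiset.induction_on with
  | empty => simp
  | cons a u ih =>
    rw [Multiset.prod_cons, Multiset.card_cons, pow_succ]
    have ha0 : 0 ≤ a := h0 a (Multiset.mem_cons_self a u)
    have hat : a ≤ t := h a (Multiset.mem_cons_self a u)
    have hu : u.prod ≤ t ^ (Multiset.card u) :=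
      ih (fun x hx => h0 x (Multiset.mem_cons_of_mem hx))
        (fun x hx => h x (Multiset.mem_cons_of_mem hx))
    have hu0 : 0 ≤ u.prod := Multiset.prod_nonneg
      fun x hx => h0 x (Multiset.mem_cons_of_mem hx)
    calc a * u.prod ≤ t * u.prod := mul_le_mul_of_nonneg_right hat hu0
      _ ≤ t * t ^ (Multiset.card u) :=
          mul_le_mul_of_nonneg_left hu (le_trans ha0 hat)
      _ = t ^ (Multiset.card u) * t := mul_comm _ _

/-- Lemma 1: the Sendov conjecture holds with respect to any root `z j`
with `|z j| ≤ n^{1/(n-1)} - 1`. -/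
theorem stmt_2 (n : ℕ) (hn : 2 ≤ n) (z : Fin n → ℂ)
    (hdisk : ∀ k, ‖z k‖ ≤ 1)
    (P : ℂ[X]) (hP : P = ∏ k : Fin n, (X - C (z k)))
    (j : Fin n) (hj : ‖z j‖ ≤ (n : ℝ) ^ ((1 : ℝ) / ((n : ℝ) - 1)) - 1) :
    ∃ w : ℂ, (Polynomial.derivative P).eval w = 0 ∧ ‖w - z j‖ ≤ 1 := by
  set Q := Polynomial.derivative P with hQ
  have hnR : (1 : ℝ) ≤ (n : ℝ) - 1 := by
    have : (2 : ℝ) ≤ (n : ℝ) := by exact_mod_cast hn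
    linarith
  -- natDegree of P
  have hmonic : P.Monic := by
    rw [hP]; exact monic_prod_of_monic _ _ fun k _ => monic_X_sub_C (z k)
  have hdegP : P.natDegree = n := by
    rw [hP, natDegree_prod_of_monic _ _ fun k _ => monic_X_sub_C (z k)]
    simp
  -- leading coefficient of Q
  have hcoeffQ : Q.coeff (n - 1) = (n : ℂ) := by
    rw [hQ, coeff_derivative]
    have h1 : n - 1 + 1 = n := by omega
    rw [h1]
    have : P.coeff n = 1 := by
      have := hmonic.leadingCoeff
      rwa [Polynomial.leadingCoeff, hdegP] at this
    rw [this, Nat.cast_sub (by omega : 1 ≤ n)]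
    push_cast
    ring
  have hnne : (n : ℂ) ≠ 0 := by
    exact_mod_cast Nat.cast_ne_zero.mpr (by omega : n ≠ 0)
  have hQne : Q ≠ 0 := fun h => hnne (by rw [← hcoeffQ, h, coeff_zero])
  have hdegQ : Q.natDegree = n - 1 := by
    apply natDegree_eq_of_le_of_coeff_ne_zero
    · have := natDegree_derivative_le P
      rwa [hdegP] at this
    · rw [hcoeffQ]; exact hnne
  have hlcQ : Q.leadingCoeff = (n : ℂ) := by
    rw [Polynomial.leadingCoeff, hdegQ, hcoeffQ]
  -- roots of Q
  have hcard : Multiset.card Q.roots = n - 1 := by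
    rw [← hdegQ]
    exact splits_iff_card_roots.mp (IsAlgClosed.splits Q)
  have hfact : C Q.leadingCoeff * (Q.roots.map fun r => X - C r).prod = Q :=
    C_leadingCoeff_mul_prod_multiset_X_sub_C (by rw [hcard, hdegQ])
  -- write P as a multiset product
  set S : Multiset ℂ := Multiset.map z Finset.univ.val with hS
  have hPS : P = (Multiset.map (fun a => X - C a) S).prod := by
    rw [hP, hS, Multiset.map_map]
    rfl
  have hjS : z j ∈ S := by
    rw [hS]
    exact Multiset.mem_map_of_mem z (Finset.mem_univ j)
  have hcardS : Multiset.card S = n := by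
    rw [hS, Multiset.card_map]
    simp
  -- evaluate Q at z j
  have hQeval : Q.eval (z j) = (Multiset.map (fun a => z j - a) (S.erase (z j))).prod := by
    rw [hQ, hPS]
    exact eval_multiset_prod_X_sub_C_derivative hjS
  -- bound |Q.eval (z j)| ≤ n
  set t : ℝ := (n : ℝ) ^ ((1 : ℝ) / ((n : ℝ) - 1)) with ht
  have htnn : 0 ≤ t := Real.rpow_nonneg (Nat.cast_nonneg n) _
  have habs : ‖Q.eval (z j)‖ ≤ (n : ℝ) := by
    rw [hQeval, ← normHom_apply, ← Multiset.prod_hom _ (normHom : ℂ →*₀ ℝ), Multiset.map_map]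
    have hbound : ∀ x ∈ Multiset.map (fun a => ‖z j - a‖) (S.erase (z j)),
        x ≤ t := by
      intro x hx
      obtain ⟨a, ha, rfl⟩ := Multiset.mem_map.mp hx
      have haS : a ∈ S := Multiset.mem_of_mem_erase ha
      obtain ⟨k, _, rfl⟩ := Multiset.mem_map.mp haS
      calc ‖z j - z k‖ ≤ ‖z j‖ + ‖z k‖ :=
            norm_sub_le _ _
        _ ≤ (t - 1) + 1 := add_le_add hj (hdisk k)
        _ = t := by ring
    have hnonneg : ∀ x ∈ Multiset.map (fun a => ‖z j - a‖) (S.erase (z j)),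
        (0 : ℝ) ≤ x := by
      intro x hx
      obtain ⟨a, _, rfl⟩ := Multiset.mem_map.mp hx
      exact norm_nonneg _
    have hcard' : Multiset.card (Multiset.map (fun a => ‖z j - a‖)
        (S.erase (z j))) = n - 1 := by
      rw [Multiset.card_map, Multiset.card_erase_of_mem hjS, hcardS]
      rfl
    calc ((S.erase (z j)).map fun a => ‖z j - a‖).prod
        ≤ t ^ Multiset.card ((S.erase (z j)).map fun a => ‖z j - a‖) :=
          multiset_prod_le_pow _ t hnonneg hbound
      _ = t ^ (n - 1) := by rw [hcard']
      _ = (n : ℝ) := by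
          rw [ht, ← Real.rpow_natCast ((n : ℝ) ^ ((1 : ℝ) / ((n : ℝ) - 1))) (n - 1),
            ← Real.rpow_mul (Nat.cast_nonneg n)]
          have hcast : ((n - 1 : ℕ) : ℝ) = (n : ℝ) - 1 := by
            rw [Nat.cast_sub (by omega : 1 ≤ n)]; push_cast; ring
          rw [hcast, one_div, inv_mul_cancel₀ (by linarith : (n : ℝ) - 1 ≠ 0),
            Real.rpow_one]
  -- product of distances to critical points is ≤ 1
  have hprod : (Q.roots.map fun r => ‖z j - r‖).prod ≤ 1 := by
    have heval : ‖Q.eval (z j)‖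
        = (n : ℝ) * (Q.roots.map fun r => ‖z j - r‖).prod := by
      conv_lhs => rw [← hfact]
      rw [eval_mul, eval_C, hlcQ, norm_mul, Complex.norm_natCast, eval_multiset_prod,
        Multiset.map_map, ← normHom_apply (Multiset.prod _), ← Multiset.prod_hom _ (normHom : ℂ →*₀ ℝ), Multiset.map_map]
      congr 2
      ext r
      simp [sub_eq_add_neg]
    have hnpos : (0 : ℝ) < n := by positivity
    nlinarith [heval ▸ habs]
  -- conclude: some root of Q is within distance 1
  by_contra hcon
  push_neg at hcon
  have hall : ∀ x ∈ Q.roots.map fun r => ‖z j - r‖, 1 ≤ x := by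
    intro x hx
    obtain ⟨r, hr, rfl⟩ := Multiset.mem_map.mp hx
    have := hcon r ((mem_roots hQne).mp hr)
    rw [norm_sub_rev] at this
    linarith
  have hne : Q.roots ≠ 0 := by
    intro h
    rw [h, Multiset.card_zero] at hcard
    omega
  obtain ⟨r, hr⟩ := Multiset.exists_mem_of_ne_zero hne
  obtain ⟨u, hu⟩ := Multiset.exists_cons_of_mem hr
  have h1 : 1 < ‖z j - r‖ := by
    have := hcon r ((mem_roots hQne).mp hr)
    rwa [norm_sub_rev] at this
  have h2 : 1 ≤ (u.map fun r => ‖z j - r‖).prod :=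
    one_le_multiset_prod _ fun x hx =>
      hall x (by rw [hu, Multiset.map_cons]; exact Multiset.mem_cons_of_mem hx)
  rw [hu, Multiset.map_cons, Multiset.prod_cons] at hprod
  nlinarith
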